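/- Let K be a field of characteristic 0, let m ≥ 2, and let f(x_1,…,x_m) = Σ a_{i_1,…,i_m} x_1^{i_1}⋯x_m^{i_m} be a formal power series in m variables over K with ∂f/∂x_1 = ∂f/∂x_2 = … = ∂f/∂x_m. Then for all exponents: a_{i_1,i_2,…,i_m} = ((i_1+i_2+⋯+i_m)! / (i_1! i_2! ⋯ i_m!)) · a_{0,0,…,0, i_1+i_2+⋯+i_m}, and consequently a_{i_1,…,i_m} = a_{i_{σ(1)},…,i_{σ(m)}} for every permutation σ of {1,…,m}. -/

import Mathlib

open scoped BigOperators

private lemma aux12 (K : Type*) [Field K] [CharZero K] (m : ℕ)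
    (f : MvPowerSeries (Fin m) K)
    (hf : ∀ j j' : Fin m, ∀ d : Fin m →₀ ℕ,
      ((d j + 1 : ℕ) : K) * MvPowerSeries.coeff (d + Finsupp.single j 1) f =
        ((d j' + 1 : ℕ) : K) * MvPowerSeries.coeff (d + Finsupp.single j' 1) f)
    (j0 : Fin m) (d : Fin m →₀ ℕ) :
    MvPowerSeries.coeff d f =
      (Nat.multinomial Finset.univ (fun i => d i) : K) *
        MvPowerSeries.coeff (Finsupp.single j0 (∑ i, d i)) f := by
  -- product of factorials helper
  have hprod : ∀ (e : Fin m →₀ ℕ) (j : Fin m),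
      (∏ i, Nat.factorial ((e + Finsupp.single j 1 : Fin m →₀ ℕ) i)) =
        (e j + 1) * ∏ i, Nat.factorial (e i) := by
    intro e j
    rw [← Finset.prod_erase_mul _ _ (Finset.mem_univ j),
      ← Finset.prod_erase_mul Finset.univ (fun i => Nat.factorial (e i)) (Finset.mem_univ j)]
    have h1 : ∀ i ∈ Finset.univ.erase j,
        Nat.factorial ((e + Finsupp.single j 1 : Fin m →₀ ℕ) i) = Nat.factorial (e i) := by
      intro i hi
      have : (Finsupp.single j 1 : Fin m →₀ ℕ) i = 0 :=
        Finsupp.single_eq_of_ne' (Finset.ne_of_mem_erase hi).symm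
      simp [Finsupp.add_apply, this]
    rw [Finset.prod_congr rfl h1]
    have h2 : (e + Finsupp.single j 1 : Fin m →₀ ℕ) j = e j + 1 := by
      simp [Finsupp.add_apply]
    rw [h2, Nat.factorial_succ]
    ring
  -- the invariant quantity step
  have step : ∀ (e : Fin m →₀ ℕ) (j j' : Fin m),
      ((∏ i, Nat.factorial ((e + Finsupp.single j 1 : Fin m →₀ ℕ) i) : ℕ) : K) *
        MvPowerSeries.coeff (e + Finsupp.single j 1) f =
      ((∏ i, Nat.factorial ((e + Finsupp.single j' 1 : Fin m →₀ ℕ) i) : ℕ) : K) *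
        MvPowerSeries.coeff (e + Finsupp.single j' 1) f := by
    intro e j j'
    rw [hprod, hprod]
    calc (((e j + 1) * ∏ i, Nat.factorial (e i) : ℕ) : K) *
          MvPowerSeries.coeff (e + Finsupp.single j 1) f
        = ((∏ i, Nat.factorial (e i) : ℕ) : K) *
            (((e j + 1 : ℕ) : K) * MvPowerSeries.coeff (e + Finsupp.single j 1) f) := by
          push_cast; ring
      _ = ((∏ i, Nat.factorial (e i) : ℕ) : K) *
            (((e j' + 1 : ℕ) : K) * MvPowerSeries.coeff (e + Finsupp.single j' 1) f) := by
          rw [hf j j' e]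
      _ = _ := by push_cast; ring
  -- main invariance by induction on the mass outside j0
  have key : ∀ k : ℕ, ∀ e : Fin m →₀ ℕ, (∑ i ∈ Finset.univ.erase j0, e i) ≤ k →
      ((∏ i, Nat.factorial (e i) : ℕ) : K) * MvPowerSeries.coeff e f =
        (((∑ i, e i).factorial : ℕ) : K) *
          MvPowerSeries.coeff (Finsupp.single j0 (∑ i, e i)) f := by
    intro k
    induction k with
    | zero =>
      intro e he
      have hz : ∀ i ∈ Finset.univ.erase j0, e i = 0 := by
        intro i hi
        have := Finset.sum_eq_zero_iff.mp (Nat.le_zero.mp he) i hi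
        exact this
      have hed : e = Finsupp.single j0 (e j0) := by
        ext i
        by_cases h : i = j0
        · subst h; simp
        · rw [hz i (Finset.mem_erase.mpr ⟨h, Finset.mem_univ i⟩),
            Finsupp.single_eq_of_ne' (Ne.symm h)]
      have hsum : (∑ i, e i) = e j0 := by
        rw [← Finset.sum_erase_add _ _ (Finset.mem_univ j0),
          Finset.sum_eq_zero hz, zero_add]
      have hfac : (∏ i, Nat.factorial (e i)) = (e j0).factorial := by
        rw [← Finset.prod_erase_mul _ _ (Finset.mem_univ j0)]
        rw [Finset.prod_eq_one (fun i hi => by rw [hz i hi]; rfl), one_mul]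
      rw [hsum, hfac, ← hed]
    | succ k ih =>
      intro e he
      rcases Nat.lt_or_ge (∑ i ∈ Finset.univ.erase j0, e i) (k + 1) with h | h
      · exact ih e (Nat.lt_succ_iff.mp h)
      · -- some j ≠ j0 has e j > 0
        have : ∃ j ∈ Finset.univ.erase j0, e j ≠ 0 := by
          by_contra hcon
          push_neg at hcon
          have : (∑ i ∈ Finset.univ.erase j0, e i) = 0 := Finset.sum_eq_zero hcon
          omega
        obtain ⟨j, hj, hej⟩ := this
        have hjne : j ≠ j0 := (Finset.mem_erase.mp hj).1
        set e' : Fin m →₀ ℕ := e - Finsupp.single j 1 with he'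
        have hrec : e' + Finsupp.single j 1 = e := by
          ext i
          by_cases h' : i = j
          · subst h'
            simp only [he', Finsupp.add_apply, Finsupp.tsub_apply, Finsupp.single_eq_same]
            omega
          · simp only [he', Finsupp.add_apply, Finsupp.tsub_apply,
              Finsupp.single_eq_of_ne' (Ne.symm h')]
            omega
        -- use step to move the unit from j to j0
        have hstep := step e' j j0
        rw [hrec] at hstep
        -- the new finsupp
        set e2 : Fin m →₀ ℕ := e' + Finsupp.single j0 1 with he2
        have houtside : (∑ i ∈ Finset.univ.erase j0, e2 i) ≤ k := by
          have h1 : (∑ i ∈ Finset.univ.erase j0, e2 i) =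
              ∑ i ∈ Finset.univ.erase j0, e' i := by
            refine Finset.sum_congr rfl fun i hi => ?_
            simp [he2, Finsupp.add_apply,
              Finsupp.single_eq_of_ne' (Ne.symm (Finset.mem_erase.mp hi).1)]
          have h2 : (∑ i ∈ Finset.univ.erase j0, e i) =
              (∑ i ∈ Finset.univ.erase j0, e' i) + 1 := by
            rw [← hrec]
            rw [Finset.sum_congr rfl (fun i _ => Finsupp.add_apply _ _ _),
              Finset.sum_add_distrib]
            congr 1
            rw [Finset.sum_eq_single_of_mem j hj
              (fun i _ hne => Finsupp.single_eq_of_ne' (Ne.symm hne))]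
            simp
          omega
        have hsum2 : (∑ i, e2 i) = ∑ i, e i := by
          rw [← hrec, he2]
          rw [Finset.sum_congr rfl (fun i _ => Finsupp.add_apply _ _ _),
            Finset.sum_add_distrib,
            Finset.sum_congr rfl (fun i (_ : i ∈ Finset.univ) => Finsupp.add_apply e' (Finsupp.single j 1) i),
            Finset.sum_add_distrib]
          congr 1
          · rw [Finset.sum_eq_single_of_mem j0 (Finset.mem_univ j0)
              (fun i _ hne => Finsupp.single_eq_of_ne' (Ne.symm hne)),
              Finset.sum_eq_single_of_mem j (Finset.mem_univ j)
              (fun i _ hne => Finsupp.single_eq_of_ne' (Ne.symm hne))]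
            simp
        have := ih e2 houtside
        rw [hsum2] at this
        calc ((∏ i, Nat.factorial (e i) : ℕ) : K) * MvPowerSeries.coeff e f
            = ((∏ i, Nat.factorial (e2 i) : ℕ) : K) * MvPowerSeries.coeff e2 f := hstep
          _ = _ := this
  -- conclude
  have hmain := key (∑ i ∈ Finset.univ.erase j0, d i) d le_rfl
  have hP : ((∏ i, Nat.factorial (d i) : ℕ) : K) ≠ 0 := by
    have h0 : (∏ i, Nat.factorial (d i)) ≠ 0 :=
      Finset.prod_ne_zero_iff.mpr fun i _ => Nat.factorial_ne_zero _
    exact_mod_cast h0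
  have hmul : ((∏ i, Nat.factorial (d i) : ℕ) : K) *
      (Nat.multinomial Finset.univ (fun i => d i) : K) = (((∑ i, d i).factorial : ℕ) : K) := by
    rw [← Nat.cast_mul, Nat.multinomial_spec]
  apply mul_left_cancel₀ hP
  rw [hmain, ← mul_assoc, hmul]

theorem stmt12 (K : Type*) [Field K] [CharZero K] (m : ℕ) (hm : 2 ≤ m)
    (f : MvPowerSeries (Fin m) K)
    (hf : ∀ j j' : Fin m, ∀ d : Fin m →₀ ℕ,
      ((d j + 1 : ℕ) : K) * MvPowerSeries.coeff (d + Finsupp.single j 1) f =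
        ((d j' + 1 : ℕ) : K) * MvPowerSeries.coeff (d + Finsupp.single j' 1) f)
    (d : Fin m →₀ ℕ) :
    MvPowerSeries.coeff d f =
        (Nat.multinomial Finset.univ (fun i => d i) : K) *
          MvPowerSeries.coeff
            (Finsupp.single (⟨m - 1, by omega⟩ : Fin m) (∑ i, d i)) f ∧
      ∀ σ : Equiv.Perm (Fin m),
        MvPowerSeries.coeff d f =
          MvPowerSeries.coeff (Finsupp.equivMapDomain σ d) f := by
  set j0 : Fin m := ⟨m - 1, by omega⟩
  refine ⟨aux12 K m f hf j0 d, fun σ => ?_⟩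
  have h1 := aux12 K m f hf j0 d
  have h2 := aux12 K m f hf j0 (Finsupp.equivMapDomain σ d)
  have happ : ∀ i, Finsupp.equivMapDomain σ d i = d (σ.symm i) := fun i =>
    Finsupp.equivMapDomain_apply σ d i
  have hsum : (∑ i, Finsupp.equivMapDomain σ d i) = ∑ i, d i := by
    rw [Finset.sum_congr rfl fun i _ => happ i]
    exact Equiv.sum_comp σ.symm (fun i => d i)
  have hmult : Nat.multinomial Finset.univ (fun i => Finsupp.equivMapDomain σ d i) =
      Nat.multinomial Finset.univ (fun i => d i) := by
    unfold Nat.multinomial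
    rw [Finset.sum_congr rfl fun i _ => happ i,
      Finset.prod_congr rfl fun i _ => congrArg Nat.factorial (happ i),
      Equiv.sum_comp σ.symm (fun i => d i),
      Equiv.prod_comp σ.symm (fun i => (d i).factorial)]
  rw [h1, h2, hsum, hmult]
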